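/- Let q be a positive integer and S ⊆ (ℤ/qℤ)^× a set of residue classes. Suppose π_E(x,0) ≤ 17857 + (2(x - 10^11 + 10))/(4 log((x - 10^11 + 10)/5)) for all x > 10^11. Prove the general integral comparison: if X_0 > 2q > 0 and X_1 > X_0, then ∫_{X_0}^{X_1} (x - X_0 + 2q)/(x(x+1) log((x - X_0 + 2q)/q)) dx < ∫_2^{X_1/q} x/((x + X_0/q - 2)^2 log x) dx. -/

import Mathlib

theorem stmt10 (n : ℕ) (hn : 0 < n) (S : Set ((ZMod n)ˣ)) (πE : ℝ → ℝ)
    (hπE : ∀ x : ℝ, 10 ^ 11 < x →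
      πE x ≤ 17857 + 2 * (x - 10 ^ 11 + 10) / (4 * Real.log ((x - 10 ^ 11 + 10) / 5)))
    (X₀ X₁ q : ℝ) (hq : 0 < q) (hX₀ : 2 * q < X₀) (hX₁ : X₀ < X₁) :
    (∫ x in X₀..X₁, (x - X₀ + 2 * q) / (x * (x + 1) * Real.log ((x - X₀ + 2 * q) / q))) <
      ∫ x in (2:ℝ)..(X₁ / q), x / ((x + X₀ / q - 2) ^ 2 * Real.log x) := by
  have hq' : q ≠ 0 := hq.ne'
  set f : ℝ → ℝ := fun x => (x - X₀ + 2 * q) / (x * (x + 1) * Real.log ((x - X₀ + 2 * q) / q))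
    with hfdef
  set g : ℝ → ℝ := fun x => x / ((x + X₀ / q - 2) ^ 2 * Real.log x) with hgdef
  set h : ℝ → ℝ := fun u =>
    q ^ 2 * u / ((q * u + X₀ - 2 * q) * (q * u + X₀ - 2 * q + 1) * Real.log u) with hhdef
  set u₁ : ℝ := X₁ / q - X₀ / q + 2 with hu₁def
  have ha : 2 < X₀ / q := by rw [lt_div_iff₀ hq]; linarith
  have hXq : X₀ / q < X₁ / q := by gcongr
  have hu₁2 : 2 < u₁ := by simp only [hu₁def]; linarith
  have hu₁X : u₁ < X₁ / q := by simp only [hu₁def]; linarith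
  -- Step 1: change of variables
  have hsub : (∫ x in X₀..X₁, f x) = q * ∫ u in (2:ℝ)..u₁, f (q * u + (X₀ - 2 * q)) := by
    rw [intervalIntegral.integral_comp_mul_add f hq' (X₀ - 2 * q)]
    rw [show q * 2 + (X₀ - 2 * q) = X₀ by ring,
      show q * u₁ + (X₀ - 2 * q) = X₁ by rw [hu₁def]; field_simp; ring]
    rw [smul_eq_mul, ← mul_assoc, mul_inv_cancel₀ hq', one_mul]
  -- the transformed integrand
  have hfun : ∀ u : ℝ, q * f (q * u + (X₀ - 2 * q)) = h u := by
    intro u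
    simp only [hfdef, hhdef]
    rw [show q * u + (X₀ - 2 * q) - X₀ + 2 * q = q * u by ring,
      mul_div_cancel_left₀ _ hq']
    ring
  have hint1 : (∫ x in X₀..X₁, f x) = ∫ u in (2:ℝ)..u₁, h u := by
    rw [hsub, ← intervalIntegral.integral_const_mul]
    exact intervalIntegral.integral_congr fun u _ => hfun u
  -- basic positivity facts on [2, ∞)
  have hlogpos : ∀ u : ℝ, 2 ≤ u → 0 < Real.log u := fun u hu =>
    Real.log_pos (by linarith)
  have hApos : ∀ u : ℝ, 2 ≤ u → 0 < q * u + X₀ - 2 * q := by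
    intro u hu
    nlinarith
  have hBpos : ∀ u : ℝ, 2 ≤ u → 0 < u + X₀ / q - 2 := fun u hu => by linarith
  -- continuity of h on Icc 2 u₁
  have hlogc : ∀ B : ℝ, ContinuousOn Real.log (Set.Icc (2:ℝ) B) :=
    fun B => Real.continuousOn_log.mono fun x hx => by
      have : (2:ℝ) ≤ x := hx.1
      simp only [Set.mem_compl_iff, Set.mem_singleton_iff]
      intro hx0; rw [hx0] at this; linarith
  have hhc : ContinuousOn h (Set.Icc 2 u₁) := by
    apply ContinuousOn.div (by fun_prop)
    · exact (Continuous.continuousOn (by fun_prop)).mul (hlogc u₁)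
    · intro u hu
      have h1 := hApos u hu.1
      have h2 := hlogpos u hu.1
      positivity
  have hgc : ∀ B : ℝ, ContinuousOn g (Set.Icc 2 B) := by
    intro B
    apply ContinuousOn.div (by fun_prop)
    · exact (Continuous.continuousOn (by fun_prop)).mul (hlogc B)
    · intro u hu
      have h1 := hBpos u hu.1
      have h2 := hlogpos u hu.1
      positivity
  -- pointwise strict inequality h < g on [2, u₁]
  have hlt : ∀ u : ℝ, 2 ≤ u → h u < g u := by
    intro u hu
    have hA := hApos u hu
    have hL := hlogpos u hu
    have hB := hBpos u hu
    have hupos : (0:ℝ) < u := by linarith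
    have hkey : q * (u + X₀ / q - 2) = q * u + X₀ - 2 * q := by field_simp
    have hkey2 : q ^ 2 * (u + X₀ / q - 2) ^ 2 = (q * u + X₀ - 2 * q) ^ 2 := by
      rw [← mul_pow, hkey]
    simp only [hhdef, hgdef]
    rw [div_lt_div_iff₀ (by positivity) (by positivity)]
    nlinarith [mul_pos (mul_pos hupos hA) hL, mul_pos hupos hL,
      mul_pos (mul_pos (mul_pos hupos hA) hA) hL]
  -- strict integral inequality on [2, u₁]
  have hstep : (∫ u in (2:ℝ)..u₁, h u) < ∫ u in (2:ℝ)..u₁, g u := by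
    apply intervalIntegral.integral_lt_integral_of_continuousOn_of_le_of_exists_lt hu₁2
      hhc (hgc u₁) (fun x hx => (hlt x hx.1.le).le)
    exact ⟨2, Set.left_mem_Icc.2 hu₁2.le, hlt 2 le_rfl⟩
  -- extend the right integral
  have hi1 : IntervalIntegrable g MeasureTheory.volume 2 u₁ :=
    ((hgc u₁).mono (by rw [Set.uIcc_of_le hu₁2.le])).intervalIntegrable
  have hi2 : IntervalIntegrable g MeasureTheory.volume u₁ (X₁ / q) := by
    apply ContinuousOn.intervalIntegrable
    apply (hgc (X₁ / q)).mono
    rw [Set.uIcc_of_le hu₁X.le]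
    exact Set.Icc_subset_Icc_left hu₁2.le
  have hnonneg : 0 ≤ ∫ u in u₁..(X₁ / q), g u := by
    apply intervalIntegral.integral_nonneg hu₁X.le
    intro u hu
    have h2u : (2:ℝ) ≤ u := le_trans hu₁2.le hu.1
    have hL := hlogpos u h2u
    have hB := hBpos u h2u
    have : (0:ℝ) < u := by linarith
    positivity
  have hsplit : (∫ u in (2:ℝ)..u₁, g u) + (∫ u in u₁..(X₁ / q), g u)
      = ∫ u in (2:ℝ)..(X₁ / q), g u :=
    intervalIntegral.integral_add_adjacent_intervals hi1 hi2
  calc (∫ x in X₀..X₁, f x) = ∫ u in (2:ℝ)..u₁, h u := hint1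
    _ < ∫ u in (2:ℝ)..u₁, g u := hstep
    _ ≤ ∫ u in (2:ℝ)..(X₁ / q), g u := by linarith
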